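/- For every integer n ≥ 0, the limit as real s → ∞ of -(Q_n'(s) - ζ'(s))/(Q_n(s) - ζ(s)) equals log(p_{n+1}), where derivatives are taken with respect to s. -/

import Mathlib

open Filter Real

noncomputable def zetaR (s : ℝ) : ℝ := ∑' m : ℕ, (m : ℝ) ^ (-s)

/-- `P k` is the (k+1)-st prime: `P 0 = 2`, `P 1 = 3`, ... -/
noncomputable def P (k : ℕ) : ℕ := Nat.nth Nat.Prime k

/-- Partial Euler product `Q n s = ∏_{k=1}^n (1 - p_k^{-s})⁻¹`. -/
noncomputable def Q (n : ℕ) (s : ℝ) : ℝ := ∏ k ∈ Finset.range n, (1 - (P k : ℝ) ^ (-s))⁻¹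

-- summability of log m * m^(-s) for s>1
lemma summable_log_rpow {s : ℝ} (hs : 1 < s) :
    Summable (fun m : ℕ => Real.log m * (m : ℝ) ^ (-s)) := by
  set b : ℝ := (1 + s) / 2 with hb
  have hb1 : 1 < b := by rw [hb]; linarith
  have hbs : b < s := by rw [hb]; linarith
  have hε : (0:ℝ) < s - b := by linarith
  refine Summable.of_nonneg_of_le (fun m => ?_) (fun m => ?_)
    ((Real.summable_nat_rpow.mpr (by linarith : -b < -1)).mul_left ((s-b)⁻¹))
  · rcases Nat.eq_zero_or_pos m with rfl | hm
    · simp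
    · exact mul_nonneg (Real.log_nonneg (by exact_mod_cast hm)) (Real.rpow_nonneg (Nat.cast_nonneg m) _)
  · have h1 : Real.log m ≤ (m:ℝ) ^ (s - b) / (s - b) := Real.log_natCast_le_rpow_div m hε
    have h2 : (0:ℝ) ≤ (m:ℝ) ^ (-s) := Real.rpow_nonneg (Nat.cast_nonneg m) _
    calc Real.log m * (m:ℝ) ^ (-s) ≤ ((m:ℝ) ^ (s-b) / (s-b)) * (m:ℝ) ^ (-s) := by
          exact mul_le_mul_of_nonneg_right h1 h2
      _ = (s-b)⁻¹ * (m:ℝ) ^ (-b) := by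
          rw [div_mul_eq_mul_div, div_eq_inv_mul]
          congr 1
          rw [← Real.rpow_add' (Nat.cast_nonneg m) (y := s - b) (z := -s) (by intro h; nlinarith)]
          ring_nf

lemma term_hasDerivAt (m : ℕ) {s₀ : ℝ} (hs : 0 < s₀) :
    HasDerivAt (fun s : ℝ => (m : ℝ) ^ (-s)) (-(Real.log m * (m : ℝ) ^ (-s₀))) s₀ := by
  rcases Nat.eq_zero_or_pos m with rfl | hm
  · have h0 : (fun s : ℝ => ((0:ℕ) : ℝ) ^ (-s)) =ᶠ[nhds s₀] (fun _ => (0:ℝ)) := by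
      filter_upwards [eventually_gt_nhds hs] with s hs'
      simp [Real.zero_rpow (by intro h; nlinarith : -s ≠ 0)]
    have := (hasDerivAt_const s₀ (0:ℝ)).congr_of_eventuallyEq h0
    simpa using this
  · have hm' : (0:ℝ) < m := by exact_mod_cast hm
    have h := (HasDerivAt.rpow (hasDerivAt_const s₀ ((m:ℝ))) (hasDerivAt_neg s₀) hm')
    convert h using 1
    ring

lemma summable_coeff_rpow (c : ℕ → ℝ) (hc : ∀ m, |c m| ≤ 1) {x : ℝ} (hx : 1 < x) :
    Summable (fun m : ℕ => c m * (m : ℝ) ^ (-x)) := by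
  refine Summable.of_norm_bounded (Real.summable_nat_rpow.mpr (by linarith : -x < -1))
    (fun m => ?_)
  rw [norm_mul]
  calc ‖c m‖ * ‖(m:ℝ) ^ (-x)‖ ≤ 1 * ‖(m:ℝ) ^ (-x)‖ :=
        mul_le_mul_of_nonneg_right (hc m) (norm_nonneg _)
    _ = (m:ℝ) ^ (-x) := by
        rw [one_mul, Real.norm_eq_abs, abs_of_nonneg (Real.rpow_nonneg (Nat.cast_nonneg m) _)]

lemma summable_coeff_log_rpow (c : ℕ → ℝ) (hc : ∀ m, |c m| ≤ 1) {x : ℝ} (hx : 1 < x) :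
    Summable (fun m : ℕ => c m * (Real.log m * (m : ℝ) ^ (-x))) := by
  refine Summable.of_norm_bounded (summable_log_rpow hx) (fun m => ?_)
  have hl : 0 ≤ Real.log m := by
    rcases Nat.eq_zero_or_pos m with rfl | hm
    · simp
    · exact Real.log_nonneg (by exact_mod_cast hm)
  have hr : 0 ≤ (m:ℝ) ^ (-x) := Real.rpow_nonneg (Nat.cast_nonneg m) _
  rw [norm_mul]
  calc ‖c m‖ * ‖Real.log m * (m:ℝ) ^ (-x)‖ ≤ 1 * ‖Real.log m * (m:ℝ) ^ (-x)‖ :=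
        mul_le_mul_of_nonneg_right (hc m) (norm_nonneg _)
    _ = Real.log m * (m:ℝ) ^ (-x) := by
        rw [one_mul, Real.norm_eq_abs, abs_of_nonneg (mul_nonneg hl hr)]

lemma hasDerivAt_tsum_rpow (c : ℕ → ℝ) (hc : ∀ m, |c m| ≤ 1) {s₀ : ℝ} (hs : 1 < s₀) :
    HasDerivAt (fun s : ℝ => ∑' m : ℕ, c m * (m : ℝ) ^ (-s))
      (-∑' m : ℕ, c m * (Real.log m * (m : ℝ) ^ (-s₀))) s₀ := by
  set a : ℝ := (1 + s₀) / 2 with ha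
  have ha1 : 1 < a := by rw [ha]; linarith
  have has : a < s₀ := by rw [ha]; linarith
  have key : HasDerivAt (fun s : ℝ => ∑' m : ℕ, c m * (m : ℝ) ^ (-s))
      (∑' m : ℕ, c m * -(Real.log m * (m : ℝ) ^ (-s₀))) s₀ := by
    refine hasDerivAt_of_tendstoLocallyUniformlyOn (l := (atTop : Filter (Finset ℕ))) (s := Set.Ioi a) isOpen_Ioi
      (f := fun t : Finset ℕ => fun s => ∑ m ∈ t, c m * (m:ℝ) ^ (-s))
      (f' := fun t : Finset ℕ => fun s => ∑ m ∈ t, c m * -(Real.log m * (m:ℝ) ^ (-s)))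
      (g := fun s => ∑' m : ℕ, c m * (m:ℝ) ^ (-s))
      (g' := fun s => ∑' m : ℕ, c m * -(Real.log m * (m:ℝ) ^ (-s)))
      ?_ ?_ ?_ has
    · refine (tendstoUniformlyOn_tsum (u := fun m : ℕ => Real.log m * (m:ℝ) ^ (-a))
        (summable_log_rpow ha1) (fun m x hx => ?_)).tendstoLocallyUniformlyOn
      rcases Nat.eq_zero_or_pos m with rfl | hm
      · simp
      · have h1m : (1:ℝ) ≤ m := by exact_mod_cast hm
        have hl : 0 ≤ Real.log m := Real.log_nonneg h1m
        have hr : 0 ≤ (m:ℝ) ^ (-x) := Real.rpow_nonneg (Nat.cast_nonneg m) _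
        rw [norm_mul, norm_neg, norm_mul]
        calc ‖c m‖ * (‖Real.log m‖ * ‖(m:ℝ) ^ (-x)‖)
            ≤ 1 * (‖Real.log m‖ * ‖(m:ℝ) ^ (-x)‖) :=
              mul_le_mul_of_nonneg_right (hc m)
                (mul_nonneg (norm_nonneg _) (norm_nonneg _))
          _ = Real.log m * (m:ℝ) ^ (-x) := by
              rw [one_mul, Real.norm_eq_abs, Real.norm_eq_abs, abs_of_nonneg hl,
                abs_of_nonneg hr]
          _ ≤ Real.log m * (m:ℝ) ^ (-a) := by
              exact mul_le_mul_of_nonneg_left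
                (Real.rpow_le_rpow_of_exponent_le h1m (by simp at hx ⊢; linarith)) hl
    · refine Eventually.of_forall (fun t x hx => HasDerivAt.fun_sum (fun m _ => ?_))
      exact ((term_hasDerivAt m (by simp at hx; linarith)).const_mul (c m))
    · intro x hx
      simp only [Set.mem_Ioi] at hx
      exact (summable_coeff_rpow c hc (by linarith)).hasSum
  convert key using 1
  rw [← tsum_neg]
  congr 1
  funext m
  ring

/-- `m ↦ m^(-s)` as a `MonoidHom ℕ →* ℝ`. -/
noncomputable def rpowHom (s : ℝ) : ℕ →* ℝ where
  toFun m := (m : ℝ) ^ (-s)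
  map_one' := by simp
  map_mul' m k := by
    push_cast
    exact Real.mul_rpow (Nat.cast_nonneg m) (Nat.cast_nonneg k)

lemma primesBelow_nth (n : ℕ) :
    Nat.primesBelow (P n) = Finset.image P (Finset.range n) := by
  ext p
  simp only [Nat.mem_primesBelow, Finset.mem_image, Finset.mem_range]
  constructor
  · rintro ⟨hlt, hp⟩
    refine ⟨Nat.count Nat.Prime p, ?_, Nat.nth_count hp⟩
    have h2 := Nat.nth_count hp
    exact (Nat.nth_lt_nth Nat.infinite_setOf_prime (p := Nat.Prime)).mp
      (by rw [h2]; exact hlt)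
  · rintro ⟨k, hk, rfl⟩
    exact ⟨(Nat.nth_lt_nth Nat.infinite_setOf_prime).mpr hk,
      Nat.prime_nth_prime k⟩

lemma Q_eq_tsum (n : ℕ) {s : ℝ} (hs : 1 < s) :
    Q n s = ∑' m : Nat.smoothNumbers (P n), ((m : ℕ) : ℝ) ^ (-s) := by
  have hsum : Summable (rpowHom s) := by
    have : Summable (fun m : ℕ => (m : ℝ) ^ (-s)) :=
      Real.summable_nat_rpow.mpr (by linarith)
    exact this
  have key := EulerProduct.prod_primesBelow_geometric_eq_tsum_smoothNumbers hsum (P n)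
  rw [primesBelow_nth] at key
  have himg : ∏ p ∈ Finset.image P (Finset.range n), ((1 - (rpowHom s) p)⁻¹ : ℝ)
      = ∏ k ∈ Finset.range n, ((1 - (rpowHom s) (P k))⁻¹ : ℝ) :=
    Finset.prod_image (fun a _ b _ h => (Nat.nth_injective Nat.infinite_setOf_prime) h)
  rw [himg] at key
  exact key

open scoped Classical in
noncomputable def cf (n : ℕ) (m : ℕ) : ℝ := if m ∈ Nat.smoothNumbers (P n) then 0 else 1

lemma cf_abs (n m : ℕ) : |cf n m| ≤ 1 := by unfold cf; split <;> norm_num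

lemma cf_nonneg (n m : ℕ) : 0 ≤ cf n m := by unfold cf; split <;> norm_num

lemma cf_le_one (n m : ℕ) : cf n m ≤ 1 := by unfold cf; split <;> norm_num

lemma cf_self (n : ℕ) : cf n (P n) = 1 := by
  unfold cf
  rw [if_neg]
  intro h
  exact absurd (Nat.mem_smoothNumbers'.mp h (P n) (Nat.prime_nth_prime n) dvd_rfl)
    (lt_irrefl _)

lemma cf_ge (n m : ℕ) (h : cf n m ≠ 0) (hm : m ≠ 0) : P n ≤ m := by
  by_contra hlt
  push_neg at hlt
  exact h (by unfold cf; rw [if_pos (Nat.mem_smoothNumbers_of_lt (Nat.pos_of_ne_zero hm) hlt)])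

noncomputable def gf (n : ℕ) (s : ℝ) : ℝ := ∑' m : ℕ, cf n m * (m : ℝ) ^ (-s)
noncomputable def hf (n : ℕ) (s : ℝ) : ℝ :=
  ∑' m : ℕ, cf n m * (Real.log m * (m : ℝ) ^ (-s))

lemma diff_eq (n : ℕ) {s : ℝ} (hs : 1 < s) : zetaR s - Q n s = gf n s := by
  have hsum : Summable (fun m : ℕ => (m : ℝ) ^ (-s)) :=
    Real.summable_nat_rpow.mpr (by linarith)
  rw [Q_eq_tsum n hs, tsum_subtype (Nat.smoothNumbers (P n)) (fun m : ℕ => (m:ℝ)^(-s))]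
  have h2 : zetaR s - ∑' m : ℕ, (Nat.smoothNumbers (P n)).indicator
        (fun m : ℕ => (m : ℝ) ^ (-s)) m
      = ∑' m : ℕ, ((m : ℝ) ^ (-s) - (Nat.smoothNumbers (P n)).indicator
        (fun m : ℕ => (m : ℝ) ^ (-s)) m) :=
    (Summable.tsum_sub hsum (hsum.indicator _)).symm
  rw [h2]
  refine tsum_congr (fun m => ?_)
  by_cases h : m ∈ Nat.smoothNumbers (P n)
  · simp [cf, Set.indicator_of_mem h, h]
  · simp [cf, Set.indicator_of_notMem h, h]

lemma zeta_hasDerivAt {s₀ : ℝ} (hs : 1 < s₀) :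
    HasDerivAt zetaR (-∑' m : ℕ, Real.log m * (m : ℝ) ^ (-s₀)) s₀ := by
  have h1 := hasDerivAt_tsum_rpow (fun _ => (1:ℝ)) (by norm_num) hs
  simp only [one_mul] at h1
  exact h1

lemma gf_hasDerivAt (n : ℕ) {s₀ : ℝ} (hs : 1 < s₀) :
    HasDerivAt (gf n) (-(hf n s₀)) s₀ :=
  hasDerivAt_tsum_rpow (cf n) (cf_abs n) hs

lemma deriv_Q (n : ℕ) {s₀ : ℝ} (hs : 1 < s₀) :
    deriv (Q n) s₀ = deriv zetaR s₀ + hf n s₀ := by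
  have hev : Q n =ᶠ[nhds s₀] fun s => zetaR s - gf n s := by
    filter_upwards [eventually_gt_nhds hs] with s hs'
    have := diff_eq n hs'; linarith
  rw [hev.deriv_eq]
  have h2 := (zeta_hasDerivAt hs).sub (gf_hasDerivAt n hs)
  rw [show (fun s => zetaR s - gf n s) = zetaR - gf n from rfl, h2.deriv, (zeta_hasDerivAt hs).deriv]
  ring

lemma expr_eq (n : ℕ) {s : ℝ} (hs : 1 < s) :
    -((deriv (Q n) s - deriv zetaR s) / (Q n s - zetaR s)) = hf n s / gf n s := by
  rw [deriv_Q n hs,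
    show Q n s - zetaR s = -(gf n s) from by have := diff_eq n hs; linarith,
    show deriv zetaR s + hf n s - deriv zetaR s = hf n s from by ring,
    div_neg, neg_neg]

lemma cf_eq_one {n m : ℕ} (h : cf n m ≠ 0) : cf n m = 1 := by
  by_cases hm : m ∈ Nat.smoothNumbers (P n)
  · exact absurd (by simp [cf, hm]) h
  · simp [cf, hm]

lemma P_pos (n : ℕ) : (0:ℝ) < (P n : ℝ) := by
  exact_mod_cast (Nat.prime_nth_prime n).pos

lemma gf_lower (n : ℕ) {s : ℝ} (hs : 1 < s) : ((P n : ℝ)) ^ (-s) ≤ gf n s := by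
  have h := Summable.le_tsum (summable_coeff_rpow (cf n) (cf_abs n) hs) (P n)
    (fun j _ => mul_nonneg (cf_nonneg n j) (Real.rpow_nonneg (Nat.cast_nonneg j) _))
  rwa [cf_self, one_mul] at h

lemma gf_pos (n : ℕ) {s : ℝ} (hs : 1 < s) : 0 < gf n s :=
  lt_of_lt_of_le (Real.rpow_pos_of_pos (P_pos n) _) (gf_lower n hs)

lemma hf_lower (n : ℕ) {s : ℝ} (hs : 1 < s) :
    Real.log (P n) * gf n s ≤ hf n s := by
  unfold gf hf
  rw [← tsum_mul_left]
  refine Summable.tsum_le_tsum (fun m => ?_)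
    ((summable_coeff_rpow (cf n) (cf_abs n) hs).mul_left _)
    (summable_coeff_log_rpow (cf n) (cf_abs n) hs)
  by_cases hc : cf n m = 0
  · simp [hc]
  · rw [cf_eq_one hc, one_mul, one_mul]
    rcases Nat.eq_zero_or_pos m with rfl | hm
    · simp [Real.zero_rpow (by linarith : -s ≠ 0)]
    · have hMm : (P n : ℝ) ≤ (m : ℝ) := by
        exact_mod_cast cf_ge n m hc (by omega)
      exact mul_le_mul_of_nonneg_right (Real.log_le_log (P_pos n) hMm)
        (Real.rpow_nonneg (Nat.cast_nonneg m) _)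

noncomputable def Cc : ℝ := ∑' m : ℕ, Real.log m * (m : ℝ) ^ (-(2:ℝ))

lemma Cc_nonneg : 0 ≤ Cc := by
  refine tsum_nonneg (fun m => ?_)
  rcases Nat.eq_zero_or_pos m with rfl | hm
  · simp
  · exact mul_nonneg (Real.log_nonneg (by exact_mod_cast hm))
      (Real.rpow_nonneg (Nat.cast_nonneg m) _)

lemma hf_upper (n : ℕ) {s : ℝ} (hs : 2 ≤ s) :
    hf n s - Real.log (P n) * gf n s ≤ ((P n : ℝ) + 1) ^ (2 - s) * Cc := by
  have hs1 : (1:ℝ) < s := by linarith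
  have hM1 : (0:ℝ) < (P n : ℝ) + 1 := by linarith [P_pos n]
  have hsub : hf n s - Real.log (P n) * gf n s
      = ∑' m : ℕ, (cf n m * (Real.log m * (m : ℝ) ^ (-s))
        - Real.log (P n) * (cf n m * (m : ℝ) ^ (-s))) := by
    unfold gf hf
    rw [Summable.tsum_sub (summable_coeff_log_rpow (cf n) (cf_abs n) hs1)
      (((summable_coeff_rpow (cf n) (cf_abs n) hs1).mul_left _)), tsum_mul_left]
  rw [hsub, show ((P n : ℝ) + 1) ^ (2 - s) * Cc
      = ∑' m : ℕ, ((P n : ℝ) + 1) ^ (2 - s) * (Real.log m * (m : ℝ) ^ (-(2:ℝ))) from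
      (tsum_mul_left).symm]
  refine Summable.tsum_le_tsum (fun m => ?_)
    ((summable_coeff_log_rpow (cf n) (cf_abs n) hs1).sub
      ((summable_coeff_rpow (cf n) (cf_abs n) hs1).mul_left _))
    ((summable_log_rpow (by norm_num)).mul_left _)
  have hRHS : 0 ≤ ((P n : ℝ) + 1) ^ (2 - s) * (Real.log m * (m : ℝ) ^ (-(2:ℝ))) := by
    refine mul_nonneg (Real.rpow_nonneg (by linarith) _) ?_
    rcases Nat.eq_zero_or_pos m with rfl | hm
    · simp
    · exact mul_nonneg (Real.log_nonneg (by exact_mod_cast hm))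
        (Real.rpow_nonneg (Nat.cast_nonneg m) _)
  by_cases hc : cf n m = 0
  · simp only [hc, zero_mul, mul_zero, sub_zero]; linarith
  · rw [cf_eq_one hc, one_mul, one_mul]
    rcases Nat.eq_zero_or_pos m with rfl | hm
    · simp only [Nat.cast_zero, Real.log_zero, zero_mul,
        Real.zero_rpow (by linarith : -s ≠ 0), mul_zero, sub_zero]
      linarith
    · have hMm : P n ≤ m := cf_ge n m hc (by omega)
      rcases eq_or_lt_of_le hMm with rfl | hlt
      · simp only [sub_self]
        exact hRHS
      · -- m ≥ P n + 1
        have hm1 : (P n : ℝ) + 1 ≤ (m : ℝ) := by exact_mod_cast hlt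
        have hmR : (0:ℝ) < (m:ℝ) := by exact_mod_cast hm
        have hlog : 0 ≤ Real.log m := Real.log_nonneg (by exact_mod_cast hm)
        have step1 : Real.log m * (m:ℝ) ^ (-s) - Real.log (P n) * (m:ℝ) ^ (-s)
            ≤ Real.log m * (m:ℝ) ^ (-s) := by
          have : 0 ≤ Real.log (P n) * (m:ℝ) ^ (-s) :=
            mul_nonneg (Real.log_nonneg (by exact_mod_cast (Nat.prime_nth_prime n).one_lt.le))
              (Real.rpow_nonneg (Nat.cast_nonneg m) _)
          linarith
        have hsplit : (m:ℝ) ^ (-s) = (m:ℝ) ^ (-(2:ℝ)) * (m:ℝ) ^ (2 - s) := by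
          rw [← Real.rpow_add hmR]; congr 1; ring
        have hbase : (m:ℝ) ^ (2 - s) ≤ ((P n : ℝ) + 1) ^ (2 - s) :=
          Real.rpow_le_rpow_of_nonpos hM1 hm1 (by linarith)
        calc Real.log m * (m:ℝ) ^ (-s) - Real.log (P n) * (m:ℝ) ^ (-s)
            ≤ Real.log m * (m:ℝ) ^ (-s) := step1
          _ = (Real.log m * (m:ℝ) ^ (-(2:ℝ))) * (m:ℝ) ^ (2 - s) := by
              rw [hsplit]; ring
          _ ≤ (Real.log m * (m:ℝ) ^ (-(2:ℝ))) * ((P n : ℝ) + 1) ^ (2 - s) := by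
              exact mul_le_mul_of_nonneg_left hbase
                (mul_nonneg hlog (Real.rpow_nonneg (Nat.cast_nonneg m) _))
          _ = ((P n : ℝ) + 1) ^ (2 - s) * (Real.log m * (m : ℝ) ^ (-(2:ℝ))) := by ring

lemma err_eq (n : ℕ) (s : ℝ) :
    ((P n : ℝ) + 1) ^ (2 - s) * Cc / (P n : ℝ) ^ (-s)
      = (Cc * ((P n : ℝ) + 1) ^ (2:ℝ)) * (((P n : ℝ) / ((P n : ℝ) + 1)) ^ s) := by
  have hM : (0:ℝ) < P n := P_pos n
  have hM1 : (0:ℝ) < (P n : ℝ) + 1 := by linarith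
  have e1 : (0:ℝ) < ((P n : ℝ) + 1) ^ s := Real.rpow_pos_of_pos hM1 s
  have e2 : (0:ℝ) < (P n : ℝ) ^ s := Real.rpow_pos_of_pos hM s
  rw [Real.rpow_sub hM1, Real.rpow_neg hM.le, Real.div_rpow hM.le hM1.le,
    div_inv_eq_mul]
  field_simp

lemma err_tendsto (n : ℕ) :
    Tendsto (fun s : ℝ => ((P n : ℝ) + 1) ^ (2 - s) * Cc / (P n : ℝ) ^ (-s))
      atTop (nhds 0) := by
  have hM : (0:ℝ) < P n := P_pos n
  have hM1 : (0:ℝ) < (P n : ℝ) + 1 := by linarith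
  have hpos : (0:ℝ) < (P n : ℝ) / ((P n : ℝ) + 1) := by positivity
  have h := tendsto_rpow_atTop_of_base_lt_one ((P n : ℝ) / ((P n : ℝ) + 1))
    (by linarith) ((div_lt_one hM1).mpr (by linarith))
  have h2 := h.const_mul (Cc * ((P n : ℝ) + 1) ^ (2:ℝ))
  rw [mul_zero] at h2
  exact h2.congr (fun s => (err_eq n s).symm)

lemma hg_tendsto (n : ℕ) :
    Tendsto (fun s : ℝ => hf n s / gf n s) atTop (nhds (Real.log (P n))) := by
  have hM : (0:ℝ) < P n := P_pos n
  refine tendsto_of_tendsto_of_tendsto_of_le_of_le' tendsto_const_nhds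
    (f := fun s => hf n s / gf n s)
    (h := fun s => Real.log (P n) + ((P n : ℝ) + 1) ^ (2 - s) * Cc / (P n : ℝ) ^ (-s))
    (by simpa using (err_tendsto n).const_add (Real.log (P n))) ?_ ?_
  · filter_upwards [eventually_gt_atTop (1:ℝ)] with s hs
    rw [le_div_iff₀ (gf_pos n hs)]
    exact hf_lower n hs
  · filter_upwards [eventually_ge_atTop (2:ℝ)] with s hs
    have hs1 : (1:ℝ) < s := by linarith
    have hgpos := gf_pos n hs1
    set D : ℝ := ((P n : ℝ) + 1) ^ (2 - s) * Cc with hD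
    have hD0 : 0 ≤ D := mul_nonneg (Real.rpow_nonneg (by linarith) _) Cc_nonneg
    have h1 : hf n s ≤ Real.log (P n) * gf n s + D := by
      have := hf_upper n hs; linarith
    calc hf n s / gf n s ≤ (Real.log (P n) * gf n s + D) / gf n s := by gcongr
      _ = Real.log (P n) + D / gf n s := by
          rw [add_div, mul_div_assoc, div_self (ne_of_gt hgpos), mul_one]
      _ ≤ Real.log (P n) + D / (P n : ℝ) ^ (-s) := by
          have hb : (0:ℝ) < (P n : ℝ) ^ (-s) := Real.rpow_pos_of_pos hM _
          have hc := gf_lower n hs1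
          gcongr


theorem log_prime_limit (n : ℕ) :
    Tendsto (fun s : ℝ => -((deriv (Q n) s - deriv zetaR s) / (Q n s - zetaR s))) atTop
      (nhds (Real.log (P n))) := by
  refine (hg_tendsto n).congr' ?_
  filter_upwards [eventually_gt_atTop (1:ℝ)] with s hs
  exact (expr_eq n hs).symm
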